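/- Let ε̄ = ε(x*) be the area threshold, and let x ∈ (0,1] be the largest fixed point in [0,1] of the density-evolution recursion z = f(g(z); ε̄), assumed to be strictly positive. Define, for z ∈ (0,1], the residual EBP EXIT curve by ε̃(z) = z·(g(x)/g(zx))^(k−1) and h̃(z) = (g(zx)/g(x))^k (these come from the residual counter-node degree distribution ρ̃(z) = 1 − g(x − zx)/g(x), via 1 − ρ̃(1 − z) = g(zx)/g(x)). Then the area under the residual EBP EXIT curve is zero: the improper integral ∫₀¹ h̃(z)·ε̃′(z) dz = 0. -/

import Mathlib

open MeasureTheory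

/-- Edge-perspective Poisson counter-node degree distribution: ρ(z) = exp(−γ(1−z)). -/
noncomputable def rho (γ z : ℝ) : ℝ := Real.exp (-γ * (1 - z))

/-- Flow-node DE update: f(y; ε) = ε · y^(k−1). -/
noncomputable def f (k : ℕ) (ε y : ℝ) : ℝ := ε * y ^ (k - 1)

/-- Combined counter-node DE update. -/
noncomputable def g (k : ℕ) (γ x : ℝ) : ℝ :=
  1 - rho γ (1 - (1 - rho γ (1 - x)) ^ (k - 1))

/-- EBP EXIT curve parametrization ε(x) = x / g(x)^(k−1). -/
noncomputable def epsC (k : ℕ) (γ x : ℝ) : ℝ := x / g k γ x ^ (k - 1)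

/-- EBP EXIT curve value h^EBP(x) = g(x)^k. -/
noncomputable def hEBP (k : ℕ) (γ x : ℝ) : ℝ := g k γ x ^ k

/-- Residual EBP EXIT curve parametrization ε̃(z) = z·(g(x)/g(zx))^(k−1),
    i.e. ε̃(z) = z / (1 − ρ̃(1 − z))^(k−1) with 1 − ρ̃(1 − z) = g(zx)/g(x). -/
noncomputable def epsTilde (k : ℕ) (γ x z : ℝ) : ℝ :=
  z * (g k γ x / g k γ (z * x)) ^ (k - 1)

/-- Residual EBP EXIT curve value h̃(z) = (g(zx)/g(x))^k = (1 − ρ̃(1 − z))^k. -/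
noncomputable def hTilde (k : ℕ) (γ x z : ℝ) : ℝ :=
  (g k γ (z * x) / g k γ x) ^ k

lemma gdiff (k : ℕ) (γ : ℝ) : Differentiable ℝ (g k γ) := by
  unfold g rho
  fun_prop

lemma g_pos (k : ℕ) (γ : ℝ) (hγ : 0 < γ) (t : ℝ) (ht : 0 < t) : 0 < g k γ t := by
  have h1 : rho γ (1 - t) < 1 := by
    rw [rho]
    have h : -γ * (1 - (1 - t)) < 0 := by nlinarith
    calc Real.exp (-γ * (1 - (1 - t))) < Real.exp 0 := Real.exp_lt_exp.mpr h
    _ = 1 := Real.exp_zero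
  have h1' : (0:ℝ) < rho γ (1 - t) := Real.exp_pos _
  have hA : 0 < (1 - rho γ (1 - t)) ^ (k - 1) := pow_pos (by linarith) _
  have h2 : rho γ (1 - (1 - rho γ (1 - t)) ^ (k - 1)) < 1 := by
    rw [rho]
    have h : -γ * (1 - (1 - (1 - rho γ (1 - t)) ^ (k - 1))) < 0 := by nlinarith
    calc Real.exp (-γ * (1 - (1 - (1 - rho γ (1 - t)) ^ (k - 1)))) < Real.exp 0 :=
      Real.exp_lt_exp.mpr h
    _ = 1 := Real.exp_zero
  rw [g]; linarith

lemma g_zero (k : ℕ) (hk : 2 ≤ k) (γ : ℝ) : g k γ 0 = 0 := by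
  simp [g, rho, zero_pow (show k - 1 ≠ 0 by omega)]

lemma epsC_diff (k : ℕ) (γ : ℝ) (hγ : 0 < γ) (t : ℝ) (ht : 0 < t) :
    DifferentiableAt ℝ (epsC k γ) t := by
  have h : epsC k γ = fun s => s / g k γ s ^ (k - 1) := rfl
  rw [h]
  exact differentiableAt_fun_id.div ((gdiff k γ t).pow _)
    (pow_ne_zero _ (g_pos k γ hγ t ht).ne')

/-- At the area threshold ε̄ = ε(x*), if x is the largest fixed point of
    z = f(g(z); ε̄) in [0,1] and x > 0, then the area under the residual EBP
    EXIT curve (for the expected residual graph when the peeling decoder stops)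
    is zero: ∫₀¹ h̃(z)·ε̃′(z) dz = 0 as a convergent improper integral. -/
theorem stmt11 (k : ℕ) (hk : 2 ≤ k) (γ : ℝ) (hγ : 0 < γ)
    (xstar : ℝ) (hxstar : xstar ∈ Set.Ioc (0:ℝ) 1)
    (hconv : IntegrableOn (fun t => hEBP k γ t * deriv (epsC k γ) t)
      (Set.Ioc 0 xstar))
    (harea : (∫ t in Set.Ioc (0:ℝ) xstar, hEBP k γ t * deriv (epsC k γ) t) = 0)
    (hnox : ¬ ∃ x' ∈ Set.Ioc xstar 1, epsC k γ x' = epsC k γ xstar)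
    (x : ℝ)
    (hfix : IsGreatest
      {z ∈ Set.Icc (0:ℝ) 1 | z = f k (epsC k γ xstar) (g k γ z)} x)
    (hxpos : 0 < x) :
    IntegrableOn (fun z => hTilde k γ x z * deriv (epsTilde k γ x) z)
      (Set.Ioc 0 1) ∧
    (∫ z in Set.Ioc (0:ℝ) 1, hTilde k γ x z * deriv (epsTilde k γ x) z) = 0 := by
  obtain ⟨m, rfl⟩ : ∃ m, k = m + 2 := ⟨k - 2, by omega⟩
  have hk1 : m + 2 - 1 = m + 1 := rfl
  have hxne : x ≠ 0 := hxpos.ne'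
  have hgx : 0 < g (m + 2) γ x := g_pos _ γ hγ x hxpos
  have hgxs : 0 < g (m + 2) γ xstar := g_pos _ γ hγ xstar hxstar.1
  -- x is on the EBP curve at height ε̄
  have hxfix : x = epsC (m + 2) γ xstar * g (m + 2) γ x ^ (m + 1) := by
    have h := hfix.1.2
    simpa [f, hk1] using h
  have hepsx : epsC (m + 2) γ x = epsC (m + 2) γ xstar := by
    rw [epsC, hk1]
    field_simp
    linarith [hxfix]
  -- x = xstar
  have hxle : x ≤ xstar := by
    by_contra h
    push_neg at h
    exact hnox ⟨x, ⟨h, hfix.1.1.2⟩, hepsx⟩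
  have hsfix : xstar = f (m + 2) (epsC (m + 2) γ xstar) (g (m + 2) γ xstar) := by
    rw [f, hk1, epsC, hk1, div_mul_cancel₀ _ (pow_ne_zero _ hgxs.ne')]
  have hsle : xstar ≤ x := hfix.2 ⟨⟨hxstar.1.le, hxstar.2⟩, hsfix⟩
  have hxx : x = xstar := le_antisymm hxle hsle
  rw [← hxx] at hconv harea
  -- epsTilde is a rescaling of epsC
  have hfun : epsTilde (m + 2) γ x
      = fun w => g (m + 2) γ x ^ (m + 1) / x * epsC (m + 2) γ (w * x) := by
    funext w
    rw [epsTilde, epsC, hk1, div_pow]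
    by_cases hw : g (m + 2) γ (w * x) = 0
    · simp [hw, zero_pow (show m + 1 ≠ 0 by omega)]
    · field_simp
  have hderiv : ∀ z : ℝ, 0 < z →
      deriv (epsTilde (m + 2) γ x) z
        = g (m + 2) γ x ^ (m + 1) / x * (deriv (epsC (m + 2) γ) (z * x) * x) := by
    intro z hz
    have hd : DifferentiableAt ℝ (epsC (m + 2) γ) (z * x) :=
      epsC_diff _ _ hγ _ (mul_pos hz hxpos)
    have hcomp : HasDerivAt (fun w => epsC (m + 2) γ (w * x))
        (deriv (epsC (m + 2) γ) (z * x) * x) z :=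
      by have := HasDerivAt.comp (x := z) hd.hasDerivAt (hasDerivAt_mul_const x); exact this
    rw [hfun]
    exact (hcomp.const_mul _).deriv
  -- pointwise identity on (0,1]
  have hEq : Set.EqOn
      (fun z => (g (m + 2) γ x)⁻¹ * (hEBP (m + 2) γ (z * x) * deriv (epsC (m + 2) γ) (z * x)))
      (fun z => hTilde (m + 2) γ x z * deriv (epsTilde (m + 2) γ x) z)
      (Set.Ioc (0:ℝ) 1) := by
    intro z hz
    have hgzx : 0 < g (m + 2) γ (z * x) := g_pos _ γ hγ _ (mul_pos hz.1 hxpos)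
    simp only
    rw [hderiv z hz.1, hTilde, hEBP, div_pow]
    field_simp
    ring
  -- integrability
  have hII : IntervalIntegrable
      (fun t => hEBP (m + 2) γ t * deriv (epsC (m + 2) γ) t) volume 0 x := by
    rw [intervalIntegrable_iff_integrableOn_Ioc_of_le hxpos.le]
    exact hconv
  have h1 : IntervalIntegrable
      (fun z => hEBP (m + 2) γ (z * x) * deriv (epsC (m + 2) γ) (z * x)) volume 0 1 := by
    have h := hII.comp_mul_right (c := x)
    simpa [hxne, div_self hxne] using h
  have hInt : IntegrableOn
      (fun z => (g (m + 2) γ x)⁻¹ * (hEBP (m + 2) γ (z * x) * deriv (epsC (m + 2) γ) (z * x)))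
      (Set.Ioc (0:ℝ) 1) := by
    rw [← intervalIntegrable_iff_integrableOn_Ioc_of_le (zero_le_one)]
    exact h1.const_mul _
  have hIntG : IntegrableOn
      (fun z => hTilde (m + 2) γ x z * deriv (epsTilde (m + 2) γ x) z)
      (Set.Ioc (0:ℝ) 1) := hInt.congr_fun hEq measurableSet_Ioc
  refine ⟨hIntG, ?_⟩
  rw [← setIntegral_congr_fun measurableSet_Ioc hEq]
  rw [integral_const_mul]
  have hz : (∫ z in Set.Ioc (0:ℝ) 1,
      hEBP (m + 2) γ (z * x) * deriv (epsC (m + 2) γ) (z * x)) = 0 := by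
    rw [← intervalIntegral.integral_of_le zero_le_one]
    rw [intervalIntegral.integral_comp_mul_right
      (fun t => hEBP (m + 2) γ t * deriv (epsC (m + 2) γ) t) hxne]
    rw [zero_mul, one_mul, intervalIntegral.integral_of_le hxpos.le]
    rw [harea, smul_zero]
  rw [hz, mul_zero]
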